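/- Let A be a primitive axial algebra of Jordan type η over a field F with char F ≠ 2, let ℬ be a basis of A consisting of η-axes, and let (·,·) be the bilinear form on A determined by (b, c) = φ_b(c) for all b, c ∈ ℬ. Then: (1) (a, u) = φ_a(u) for every η-axis a ∈ A and every u ∈ A; (2) (a, a) = 1 for every η-axis a ∈ A; (3) (u^ψ, v^ψ) = (u, v) for every algebra automorphism ψ of A and all u, v ∈ A. -/

import Mathlib

universe u v

section Prelim

variable (F : Type u) {A : Type v} [Field F] [NonUnitalNonAssocCommRing A]
  [Module F A] [SMulCommClass F A A] [IsScalarTower F A A]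

/-- The λ-eigenspace of the adjoint map `ad_a : x ↦ a * x`. -/
def eigSp (a : A) (l : F) : Submodule F A where
  carrier := {x | a * x = l • x}
  add_mem' := by
    intro x y hx hy
    simp only [Set.mem_setOf_eq] at *
    rw [mul_add, hx, hy, smul_add]
  zero_mem' := by simp
  smul_mem' := by
    intro c x hx
    simp only [Set.mem_setOf_eq] at *
    rw [mul_smul_comm, hx, smul_smul, smul_smul, mul_comm]

/-- `a` is a (primitive) `η`-axis. -/
structure IsAxis (η : F) (a : A) : Prop where
  ne_zero : a ≠ 0
  idem : a * a = a
  decomp : eigSp F a 1 ⊔ eigSp F a 0 ⊔ eigSp F a η = ⊤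
  prim : eigSp F a 1 = Submodule.span F {a}
  f11 : ∀ x ∈ eigSp F a 1, ∀ y ∈ eigSp F a 1, x * y ∈ eigSp F a 1
  f00 : ∀ x ∈ eigSp F a 0, ∀ y ∈ eigSp F a 0, x * y ∈ eigSp F a 0
  f10 : ∀ x ∈ eigSp F a 1, ∀ y ∈ eigSp F a 0, x * y = 0
  fpe : ∀ x ∈ eigSp F a 1 ⊔ eigSp F a 0, ∀ y ∈ eigSp F a η, x * y ∈ eigSp F a η
  fee : ∀ x ∈ eigSp F a η, ∀ y ∈ eigSp F a η, x * y ∈ eigSp F a 1 ⊔ eigSp F a 0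

/-- `τ` is the Miyamoto involution of the `η`-axis `a`. -/
structure IsMiyamoto (η : F) (a : A) (τ : A → A) : Prop where
  fixes : ∀ x ∈ eigSp F a 1 ⊔ eigSp F a 0, τ x = x
  negates : ∀ x ∈ eigSp F a η, τ x = -x
  map_add : ∀ x y : A, τ (x + y) = τ x + τ y
  map_smul : ∀ (c : F) (x : A), τ (c • x) = c • τ x
  map_mul : ∀ x y : A, τ (x * y) = τ x * τ y
  bijective : Function.Bijective τ

/-- `c = φ_a(u)`, the projection of `u` to `F·a` w.r.t. the axis `a`. -/
def IsProjCoeff (η : F) (a u : A) (c : F) : Prop :=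
  ∃ u0 ∈ eigSp F a 0, ∃ ue ∈ eigSp F a η, u = c • a + u0 + ue

/-- `e` is an identity element of the subalgebra `N`. -/
def IsIdentOf (N : NonUnitalSubalgebra F A) (e : A) : Prop :=
  e ∈ N ∧ ∀ z ∈ N, e * z = z

/-- `ψ` is an `F`-algebra automorphism of `A`. -/
structure IsAlgAut (ψ : A → A) : Prop where
  map_add : ∀ x y : A, ψ (x + y) = ψ x + ψ y
  map_smul : ∀ (c : F) (x : A), ψ (c • x) = c • ψ x
  map_mul : ∀ x y : A, ψ (x * y) = ψ x * ψ y
  bijective : Function.Bijective ψ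

/-- The graph `Δ_𝒜`: distinct axes are adjacent iff their product is nonzero. -/
def axesGraph (𝒜 : Set A) : SimpleGraph 𝒜 where
  Adj x y := x ≠ y ∧ (x : A) * (y : A) ≠ 0
  symm := by
    constructor
    rintro x y ⟨hxy, hm⟩
    exact ⟨hxy.symm, by rwa [mul_comm]⟩
  loopless := by constructor; rintro x ⟨h, -⟩; exact h rfl

/-- Multiplication of the Jordan algebra of Clifford type `J(V,B) = F·e ⊕ V`. -/
def cliffMul {V : Type*} [AddCommGroup V] [Module F V]
    (B : V →ₗ[F] V →ₗ[F] F) (x y : F × V) : F × V :=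
  (x.1 * y.1 + B x.2 y.2, x.1 • y.2 + y.1 • x.2)

end Prelim

/-- An isomorphism of `A` with a Jordan algebra of Clifford type `J(V,B)`. -/
structure CliffordTypeIso (F : Type u) (A : Type v) [Field F]
    [NonUnitalNonAssocCommRing A] [Module F A] [SMulCommClass F A A]
    [IsScalarTower F A A] where
  V : Type v
  [instAdd : AddCommGroup V]
  [instMod : Module F V]
  B : V →ₗ[F] V →ₗ[F] F
  symm : ∀ v w : V, B v w = B w v
  iso : A ≃ₗ[F] F × V
  mul_compat : ∀ x y : A, iso (x * y) = cliffMul F B (iso x) (iso y)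

section Helpers
set_option linter.unusedSectionVars false

variable {F : Type u} {A : Type v} [Field F] [NonUnitalNonAssocCommRing A]
  [Module F A] [SMulCommClass F A A] [IsScalarTower F A A]

lemma mem_eigSp {a x : A} {l : F} : x ∈ eigSp F a l ↔ a * x = l • x := Iff.rfl

lemma smul_zero_cancel {c : F} {v : A} (hc : c ≠ 0) (h : c • v = 0) : v = 0 := by
  have h2 := congrArg (fun z => c⁻¹ • z) h
  simpa [smul_smul, inv_mul_cancel₀ hc] using h2

lemma smul_cancel {c d : F} {a : A} (ha : a ≠ 0) (h : c • a = d • a) : c = d := by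
  by_contra hne
  have h2 : (c - d) • a = 0 := by rw [sub_smul, h, sub_self]
  exact ha (smul_zero_cancel (sub_ne_zero.mpr hne) h2)

lemma projCoeff_spec {η : F} {a u : A} {c : F} (haa : a * a = a)
    (h : IsProjCoeff F η a u c) :
    a * (a * u) - η • (a * u) = ((1 - η) * c) • a := by
  obtain ⟨u0, h0, ue, he, rfl⟩ := h
  have h0' : a * u0 = 0 := by simpa using (mem_eigSp.mp h0)
  have he' : a * ue = η • ue := mem_eigSp.mp he
  have h1 : a * (c • a + u0 + ue) = c • a + η • ue := by
    rw [mul_add, mul_add, mul_smul_comm, haa, h0', he', add_zero]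
  rw [h1, mul_add, mul_smul_comm, haa, mul_smul_comm, he']
  module

lemma projCoeff_unique {η : F} {a u : A} {c c' : F} (ha0 : a ≠ 0) (haa : a * a = a)
    (hη1 : η ≠ 1) (h : IsProjCoeff F η a u c) (h' : IsProjCoeff F η a u c') : c = c' := by
  have e := (projCoeff_spec haa h).symm.trans (projCoeff_spec haa h')
  have e2 := smul_cancel ha0 e
  have h1η : (1 : F) - η ≠ 0 := sub_ne_zero.mpr (Ne.symm hη1)
  exact mul_left_cancel₀ h1η e2

lemma eig_triple {η : F} (hη0 : η ≠ 0) (hη1 : η ≠ 1) {a x1 x0 xe y1 y0 ye : A}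
    (h1 : a * x1 = x1) (h0 : a * x0 = 0) (he : a * xe = η • xe)
    (g1 : a * y1 = y1) (g0 : a * y0 = 0) (ge : a * ye = η • ye)
    (hsum : x1 + x0 + xe = y1 + y0 + ye) :
    x1 = y1 ∧ x0 = y0 ∧ xe = ye := by
  have e1 : x1 + η • xe = y1 + η • ye := by
    have h := congrArg (fun z => a * z) hsum
    simpa only [mul_add, h1, h0, he, g1, g0, ge, add_zero] using h
  have e2 : x1 + (η * η) • xe = y1 + (η * η) • ye := by
    have h := congrArg (fun z => a * z) e1
    simpa only [mul_add, h1, g1, mul_smul_comm, he, ge, smul_smul] using h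
  have hmul : η * η - η ≠ 0 := by
    intro hcontra
    have hz : η * (η - 1) = 0 := by linear_combination hcontra
    rcases mul_eq_zero.mp hz with h | h
    · exact hη0 h
    · exact hη1 (sub_eq_zero.mp h)
  have exe : xe = ye := by
    have h3 : (η * η - η) • (xe - ye) = 0 := by
      have : (η * η - η) • (xe - ye)
          = ((x1 + (η * η) • xe) - (x1 + η • xe)) - ((y1 + (η * η) • ye) - (y1 + η • ye)) := by
        module
      rw [this, e1, e2]
      abel
    exact sub_eq_zero.mp (smul_zero_cancel hmul h3)
  have ex1 : x1 = y1 := by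
    rw [exe] at e1
    exact add_right_cancel e1
  have ex0 : x0 = y0 := by
    rw [exe, ex1] at hsum
    exact add_left_cancel (add_right_cancel hsum)
  exact ⟨ex1, ex0, exe⟩


lemma key_half {η : F} (hη0 : η ≠ 0) (hη1 : η ≠ 1)
    {a b : A} (ha : IsAxis F η a) (hb : IsAxis F η b)
    (φ : A → A → F) (hφ : ∀ x : A, IsAxis F η x → ∀ u : A, IsProjCoeff F η x u (φ x u)) :
    φ a b * φ a b = φ b a * φ a b := by
  set σ := φ a b with hσdef
  set β := φ b a with hβdef
  obtain ⟨p, hp, q, hq, hbdec⟩ := hφ a ha b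
  rw [← hσdef] at hbdec
  have hp0 : a * p = 0 := by simpa using (mem_eigSp.mp hp)
  have hq' : a * q = η • q := mem_eigSp.mp hq
  have haa := ha.idem
  have ha0 := ha.ne_zero
  -- a * b
  have hab : a * b = σ • a + η • q := by
    rw [hbdec, mul_add, mul_add, mul_smul_comm, haa, hp0, hq', add_zero]
  -- q * q decomposition
  obtain ⟨y, hy, w, hw, hyw⟩ := Submodule.mem_sup.mp (ha.fee q hq q hq)
  rw [ha.prim] at hy
  obtain ⟨γ, hγa⟩ := Submodule.mem_span_singleton.mp hy
  have hqqe : q * q = γ • a + w := by rw [← hyw, hγa]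
  have hw0 : a * w = 0 := by simpa using (mem_eigSp.mp hw)
  have hpq : a * (p * q) = η • (p * q) :=
    mem_eigSp.mp (ha.fpe p (Submodule.mem_sup_right hp) q hq)
  have hpp : a * (p * p) = 0 := by simpa using (mem_eigSp.mp (ha.f00 p hp p hp))
  -- b * p and b * q
  have hbp : b * p = p * p + p * q := by
    conv_lhs => rw [hbdec]
    rw [add_mul, add_mul, smul_mul_assoc, hp0, smul_zero, zero_add, mul_comm q p]
  have hbq : b * q = (σ * η) • q + p * q + (γ • a + w) := by
    conv_lhs => rw [hbdec]
    rw [add_mul, add_mul, smul_mul_assoc, hq', smul_smul, hqqe]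
  -- expansion of b = b * b
  have hbb : σ • (σ • a + η • q) + (p * p + p * q) + ((σ * η) • q + p * q + (γ • a + w))
      = σ • a + p + q := by
    have h4 : b * (σ • a + p + q) = b := by rw [← hbdec, hb.idem]
    rw [mul_add, mul_add, mul_smul_comm, mul_comm b a, hab, hbp, hbq] at h4
    rw [h4]; exact hbdec
  -- put into component form and compare
  have hcomp1 := eig_triple hη0 hη1
    (x1 := (σ * σ + γ) • a) (x0 := p * p + w) (xe := (σ * η + σ * η) • q + (p * q + p * q))
    (y1 := σ • a) (y0 := p) (ye := q)
    (by rw [mul_smul_comm, haa]) (by rw [mul_add, hpp, hw0, add_zero])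
    (by rw [mul_add, mul_smul_comm, hq', mul_add, hpq]; module)
    (by rw [mul_smul_comm, haa]) hp0 hq'
    (by rw [← hbb]; module)
  have hγ : σ * σ + γ = σ := smul_cancel ha0 hcomp1.1
  -- the b-side identity applied to a
  have hspec := projCoeff_spec hb.idem (hφ b hb a)
  rw [mul_comm b a, hab, ← hβdef] at hspec
  -- expand b * (σ • a + η • q)
  have hW1 : b * (σ • a + η • q) = σ • (σ • a + η • q)
      + η • ((σ * η) • q + p * q + (γ • a + w)) := by
    rw [mul_add, mul_smul_comm, mul_comm b a, hab, mul_smul_comm, hbq]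
  rw [hW1, hbdec] at hspec
  -- hspec : σ•(σ•a+η•q) + η•((σ*η)•q + p*q + (γ•a+w)) - η•(σ•a+η•q)
  --           = ((1-η)*β)•(σ•a+p+q)
  have hcomp2 := eig_triple hη0 hη1
    (x1 := (σ * σ + η * γ - η * σ) • a) (x0 := η • w)
    (xe := (σ * η + η * (σ * η) - η * η) • q + η • (p * q))
    (y1 := ((1 - η) * β * σ) • a) (y0 := ((1 - η) * β) • p) (ye := ((1 - η) * β) • q)
    (by rw [mul_smul_comm, haa]) (by rw [mul_smul_comm, hw0, smul_zero])
    (by rw [mul_add, mul_smul_comm, hq', mul_smul_comm, hpq]; module)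
    (by rw [mul_smul_comm, haa]) (by rw [mul_smul_comm, hp0, smul_zero])
    (by rw [mul_smul_comm, hq']; module)
    (by linear_combination (norm := module) hspec)
  have hE1 : σ * σ + η * γ - η * σ = (1 - η) * β * σ := smul_cancel ha0 hcomp2.1
  have h1η : (1 : F) - η ≠ 0 := sub_ne_zero.mpr (Ne.symm hη1)
  have hz : (1 - η) * (σ * σ - β * σ) = 0 := by linear_combination hE1 - η * hγ
  rcases mul_eq_zero.mp hz with h | h
  · exact absurd h h1η
  · linear_combination h


lemma phi_symm {η : F} (hη0 : η ≠ 0) (hη1 : η ≠ 1)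
    {a b : A} (ha : IsAxis F η a) (hb : IsAxis F η b)
    (φ : A → A → F) (hφ : ∀ x : A, IsAxis F η x → ∀ u : A, IsProjCoeff F η x u (φ x u)) :
    φ a b = φ b a := by
  have h1 := key_half hη0 hη1 ha hb φ hφ
  have h2 := key_half hη0 hη1 hb ha φ hφ
  have hz : (φ a b - φ b a) * (φ a b - φ b a) = 0 := by linear_combination h1 + h2
  have := mul_self_eq_zero.mp hz
  linear_combination this

lemma phi_self {η : F} (hη1 : η ≠ 1) {a : A} (ha : IsAxis F η a)
    (φ : A → A → F) (hφ : ∀ x : A, IsAxis F η x → ∀ u : A, IsProjCoeff F η x u (φ x u)) :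
    φ a a = 1 := by
  refine projCoeff_unique ha.ne_zero ha.idem hη1 (hφ a ha a) ⟨0, zero_mem _, 0, zero_mem _, ?_⟩
  simp

lemma phi_add {η : F} (hη1 : η ≠ 1) {a : A} (ha : IsAxis F η a)
    (φ : A → A → F) (hφ : ∀ x : A, IsAxis F η x → ∀ u : A, IsProjCoeff F η x u (φ x u))
    (u v : A) : φ a (u + v) = φ a u + φ a v := by
  obtain ⟨u0, hu0, ue, hue, hu⟩ := hφ a ha u
  obtain ⟨v0, hv0, ve, hve, hv⟩ := hφ a ha v
  refine projCoeff_unique ha.ne_zero ha.idem hη1 (hφ a ha (u + v))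
    ⟨u0 + v0, add_mem hu0 hv0, ue + ve, add_mem hue hve, ?_⟩
  linear_combination (norm := module) hu + hv

lemma phi_smul {η : F} (hη1 : η ≠ 1) {a : A} (ha : IsAxis F η a)
    (φ : A → A → F) (hφ : ∀ x : A, IsAxis F η x → ∀ u : A, IsProjCoeff F η x u (φ x u))
    (c : F) (u : A) : φ a (c • u) = c * φ a u := by
  obtain ⟨u0, hu0, ue, hue, hu⟩ := hφ a ha u
  refine projCoeff_unique ha.ne_zero ha.idem hη1 (hφ a ha (c • u))
    ⟨c • u0, Submodule.smul_mem _ c hu0, c • ue, Submodule.smul_mem _ c hue, ?_⟩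
  linear_combination (norm := module) c • hu

/-- `φ a` as a linear map, for an axis `a`. -/
def phiLM {η : F} (hη1 : η ≠ 1) {a : A} (ha : IsAxis F η a)
    (φ : A → A → F) (hφ : ∀ x : A, IsAxis F η x → ∀ u : A, IsProjCoeff F η x u (φ x u)) :
    A →ₗ[F] F where
  toFun := φ a
  map_add' := phi_add hη1 ha φ hφ
  map_smul' := phi_smul hη1 ha φ hφ

section Aut

variable {ψ : A → A}

/-- An algebra automorphism as a linear map. -/
def autLM (hψ : IsAlgAut F ψ) : A →ₗ[F] A where
  toFun := ψ
  map_add' := hψ.map_add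
  map_smul' := hψ.map_smul

lemma aut_map_zero (hψ : IsAlgAut F ψ) : ψ 0 = 0 := by
  simpa using hψ.map_smul 0 0

lemma eigSp_aut (hψ : IsAlgAut F ψ) (a : A) (l : F) :
    eigSp F (ψ a) l = (eigSp F a l).map (autLM hψ) := by
  ext x
  rw [Submodule.mem_map]
  constructor
  · intro hx
    obtain ⟨y, rfl⟩ := hψ.bijective.2 x
    refine ⟨y, ?_, rfl⟩
    have : ψ (a * y) = ψ (l • y) := by
      rw [hψ.map_mul, hψ.map_smul]; exact hx
    exact mem_eigSp.mpr (hψ.bijective.1 this)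
  · rintro ⟨y, hy, rfl⟩
    show ψ a * (autLM hψ) y = l • (autLM hψ) y
    show ψ a * ψ y = l • ψ y
    rw [← hψ.map_mul, mem_eigSp.mp hy, hψ.map_smul]

lemma axis_aut {η : F} (hψ : IsAlgAut F ψ) {a : A} (ha : IsAxis F η a) : IsAxis F η (ψ a) := by
  have hrange : Submodule.map (autLM hψ) ⊤ = ⊤ := by
    rw [Submodule.map_top, LinearMap.range_eq_top]
    exact hψ.bijective.2
  refine ⟨?_, ?_, ?_, ?_, ?_, ?_, ?_, ?_, ?_⟩
  · intro h
    exact ha.ne_zero (hψ.bijective.1 (h.trans (aut_map_zero hψ).symm))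
  · rw [← hψ.map_mul, ha.idem]
  · rw [eigSp_aut hψ, eigSp_aut hψ, eigSp_aut hψ, ← Submodule.map_sup, ← Submodule.map_sup,
      ha.decomp, hrange]
  · rw [eigSp_aut hψ, ha.prim, Submodule.map_span, Set.image_singleton]
    rfl
  · intro x hx y hy
    rw [eigSp_aut hψ] at hx hy ⊢
    obtain ⟨x', hx', rfl⟩ := hx
    obtain ⟨y', hy', rfl⟩ := hy
    exact ⟨x' * y', ha.f11 x' hx' y' hy', hψ.map_mul x' y'⟩
  · intro x hx y hy
    rw [eigSp_aut hψ] at hx hy ⊢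
    obtain ⟨x', hx', rfl⟩ := hx
    obtain ⟨y', hy', rfl⟩ := hy
    exact ⟨x' * y', ha.f00 x' hx' y' hy', hψ.map_mul x' y'⟩
  · intro x hx y hy
    rw [eigSp_aut hψ] at hx hy
    obtain ⟨x', hx', rfl⟩ := hx
    obtain ⟨y', hy', rfl⟩ := hy
    show ψ x' * ψ y' = 0
    rw [← hψ.map_mul, ha.f10 x' hx' y' hy', aut_map_zero hψ]
  · intro x hx y hy
    rw [eigSp_aut hψ, eigSp_aut hψ, ← Submodule.map_sup] at hx
    rw [eigSp_aut hψ] at hy ⊢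
    obtain ⟨x', hx', rfl⟩ := hx
    obtain ⟨y', hy', rfl⟩ := hy
    exact ⟨x' * y', ha.fpe x' hx' y' hy', hψ.map_mul x' y'⟩
  · intro x hx y hy
    rw [eigSp_aut hψ] at hx hy
    rw [eigSp_aut hψ, eigSp_aut hψ, ← Submodule.map_sup]
    obtain ⟨x', hx', rfl⟩ := hx
    obtain ⟨y', hy', rfl⟩ := hy
    exact ⟨x' * y', ha.fee x' hx' y' hy', hψ.map_mul x' y'⟩

lemma phi_aut {η : F} (hψ : IsAlgAut F ψ) (hη1 : η ≠ 1) {a : A} (ha : IsAxis F η a)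
    (φ : A → A → F) (hφ : ∀ x : A, IsAxis F η x → ∀ u : A, IsProjCoeff F η x u (φ x u))
    (u : A) : φ (ψ a) (ψ u) = φ a u := by
  have haψ := axis_aut hψ ha
  refine projCoeff_unique haψ.ne_zero haψ.idem hη1 (hφ (ψ a) haψ (ψ u)) ?_
  obtain ⟨u0, hu0, ue, hue, hu⟩ := hφ a ha u
  refine ⟨ψ u0, ?_, ψ ue, ?_, ?_⟩
  · rw [eigSp_aut hψ]; exact ⟨u0, hu0, rfl⟩
  · rw [eigSp_aut hψ]; exact ⟨ue, hue, rfl⟩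
  · conv_lhs => rw [hu]
    rw [hψ.map_add, hψ.map_add, hψ.map_smul]

end Aut

end Helpers


/-- Let `ℬ` be a basis of `A` consisting of `η`-axes and let
`(·,·)` be the bilinear form determined by `(b, c) = φ_b(c)` for `b, c ∈ ℬ`.
Then (1) `(a, u) = φ_a(u)` for every `η`-axis `a` and every `u ∈ A`;
(2) `(a, a) = 1` for every `η`-axis `a`; (3) the form is invariant under all
algebra automorphisms of `A`. -/
theorem frobenius_form_properties
    {F : Type u} {A : Type v} {ι : Type v} [Field F] [NonUnitalNonAssocCommRing A]
    [Module F A] [SMulCommClass F A A] [IsScalarTower F A A]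
    (hchar : (2 : F) ≠ 0) (η : F) (hη0 : η ≠ 0) (hη1 : η ≠ 1)
    (𝒜 : Set A) (h𝒜 : ∀ a ∈ 𝒜, IsAxis F η a)
    (hgen : NonUnitalAlgebra.adjoin F 𝒜 = ⊤)
    (bB : Module.Basis ι F A) (hax : ∀ i : ι, IsAxis F η (bB i))
    (φ : A → A → F)
    (hφ : ∀ a : A, IsAxis F η a → ∀ u : A, IsProjCoeff F η a u (φ a u))
    (Φ : A →ₗ[F] A →ₗ[F] F)
    (hΦ : ∀ i j : ι, Φ (bB i) (bB j) = φ (bB i) (bB j)) :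
    (∀ a : A, IsAxis F η a → ∀ u : A, Φ a u = φ a u) ∧
    (∀ a : A, IsAxis F η a → Φ a a = 1) ∧
    (∀ ψ : A → A, IsAlgAut F ψ → ∀ u v : A, Φ (ψ u) (ψ v) = Φ u v) := by
  have main1 : ∀ a : A, IsAxis F η a → ∀ u : A, Φ a u = φ a u := by
    have hcol : ∀ j : ι, (Φ.flip (bB j) : A →ₗ[F] F) = phiLM hη1 (hax j) φ hφ := by
      intro j
      apply bB.ext
      intro i
      show Φ (bB i) (bB j) = φ (bB j) (bB i)
      rw [hΦ i j]
      exact phi_symm hη0 hη1 (hax i) (hax j) φ hφ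
    intro a ha
    have hrow : ∀ j : ι, Φ a (bB j) = (phiLM hη1 ha φ hφ) (bB j) := by
      intro j
      have h1 : Φ a (bB j) = Φ.flip (bB j) a := rfl
      rw [h1, hcol j]
      show φ (bB j) a = φ a (bB j)
      exact phi_symm hη0 hη1 (hax j) ha φ hφ
    intro u
    exact DFunLike.congr_fun (bB.ext hrow : Φ a = phiLM hη1 ha φ hφ) u
  refine ⟨main1, ?_, ?_⟩
  · intro a ha
    rw [main1 a ha a]
    exact phi_self hη1 ha φ hφ
  · intro ψ hψ u v
    have hG : ∀ i j : ι, Φ (ψ (bB i)) (ψ (bB j)) = Φ (bB i) (bB j) := by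
      intro i j
      rw [main1 (ψ (bB i)) (axis_aut hψ (hax i)) (ψ (bB j)),
        phi_aut hψ hη1 (hax i) φ hφ (bB j), hΦ i j]
    have hC : Φ.compl₁₂ (autLM hψ) (autLM hψ) = Φ := by
      apply bB.ext
      intro i
      apply bB.ext
      intro j
      exact hG i j
    have := DFunLike.congr_fun (DFunLike.congr_fun hC u) v
    exact this
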